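/- Let f_1,...,f_m ∈ ℝ^n. For each subset S of {1,...,m} let F_S be the matrix with columns (f_j)_{j∈S} and σ_n(F_S) its n-th singular value. Define Δ² = min over subsets S of (σ_n(F_S)² + σ_n(F_{S^c})²). Then for all x, y ∈ ℝ^n with w_1 = x+y, w_2 = x-y both nonzero: Σ_{j=1}^m min(|⟨f_j,w_1⟩|², |⟨f_j,w_2⟩|²) ≥ Δ² · min(‖w_1‖², ‖w_2‖²). -/

import Mathlib

open scoped RealInnerProductSpace BigOperators

theorem stmt14 {n m : ℕ} (f : Fin m → EuclideanSpace ℝ (Fin n))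
    (A : Finset (Fin m) → ℝ)
    (hA : ∀ S : Finset (Fin m),
      IsGreatest {a : ℝ | ∀ u : EuclideanSpace ℝ (Fin n),
        a * ‖u‖ ^ 2 ≤ ∑ j ∈ S, abs (⟪u, f j⟫) ^ 2} (A S))
    (Δsq : ℝ)
    (hΔ : IsLeast {t : ℝ | ∃ S : Finset (Fin m), t = A S + A Sᶜ} Δsq)
    (x y : EuclideanSpace ℝ (Fin n)) (h₁ : x + y ≠ 0) (h₂ : x - y ≠ 0) :
    Δsq * min (‖x + y‖ ^ 2) (‖x - y‖ ^ 2) ≤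
      ∑ j, min (abs (⟪f j, x + y⟫) ^ 2) (abs (⟪f j, x - y⟫) ^ 2) := by
  set w₁ := x + y
  set w₂ := x - y
  set S : Finset (Fin m) :=
    Finset.univ.filter (fun j => abs (⟪f j, w₁⟫) ^ 2 ≤ abs (⟪f j, w₂⟫) ^ 2) with hS
  have hA0 : ∀ T : Finset (Fin m), 0 ≤ A T := by
    intro T
    exact (hA T).2 (fun u => by simp; positivity)
  have hmin0 : 0 ≤ min (‖w₁‖ ^ 2) (‖w₂‖ ^ 2) := le_min (by positivity) (by positivity)
  have hΔle : Δsq ≤ A S + A Sᶜ := hΔ.2 ⟨S, rfl⟩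
  have h1 : A S * ‖w₁‖ ^ 2 ≤ ∑ j ∈ S, abs (⟪f j, w₁⟫) ^ 2 := by
    have := (hA S).1 w₁
    simpa [real_inner_comm, mul_comm] using this
  have h2 : A Sᶜ * ‖w₂‖ ^ 2 ≤ ∑ j ∈ Sᶜ, abs (⟪f j, w₂⟫) ^ 2 := by
    have := (hA Sᶜ).1 w₂
    simpa [real_inner_comm, mul_comm] using this
  have hsplit : ∑ j, min (abs (⟪f j, w₁⟫) ^ 2) (abs (⟪f j, w₂⟫) ^ 2)
      = ∑ j ∈ S, abs (⟪f j, w₁⟫) ^ 2 + ∑ j ∈ Sᶜ, abs (⟪f j, w₂⟫) ^ 2 := by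
    rw [← Finset.sum_add_sum_compl S]
    congr 1
    · apply Finset.sum_congr rfl
      intro j hj
      rw [hS] at hj
      exact min_eq_left (Finset.mem_filter.mp hj).2
    · apply Finset.sum_congr rfl
      intro j hj
      rw [Finset.mem_compl, hS, Finset.mem_filter] at hj
      push_neg at hj
      exact min_eq_right (le_of_lt (hj (Finset.mem_univ j)))
  calc Δsq * min (‖w₁‖ ^ 2) (‖w₂‖ ^ 2)
      ≤ (A S + A Sᶜ) * min (‖w₁‖ ^ 2) (‖w₂‖ ^ 2) :=
        mul_le_mul_of_nonneg_right hΔle hmin0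
    _ ≤ A S * ‖w₁‖ ^ 2 + A Sᶜ * ‖w₂‖ ^ 2 := by
        rw [add_mul]
        gcongr
        · exact hA0 S
        · exact min_le_left _ _
        · exact hA0 Sᶜ
        · exact min_le_right _ _
    _ ≤ _ := by rw [hsplit]; exact add_le_add h1 h2
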